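/- The concavity defect of the expected residual map has the explicit form: for psd A, H with positive traces and θ ∈ [0,1] with θ̄ = 1-θ, Φ(θA + θ̄H) - θΦ(A) - θ̄Φ(H) = (θθ̄ / (θ tr(A) + θ̄ tr(H))) · (√(tr(H)/tr(A)) A - √(tr(A)/tr(H)) H)². -/

import Mathlib

/-- The expected residual map `Φ(M) = M - M²/tr(M)`. -/
noncomputable def Phi {N : ℕ} (M : Matrix (Fin N) (Fin N) ℝ) : Matrix (Fin N) (Fin N) ℝ :=
  M - M.trace⁻¹ • (M * M)

/-- Explicit form of the concavity defect of `Φ`. -/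
theorem phi_concavity_defect {N : ℕ} (A H : Matrix (Fin N) (Fin N) ℝ)
    (hA : A.PosSemidef) (hH : H.PosSemidef)
    (htrA : 0 < A.trace) (htrH : 0 < H.trace)
    (θ : ℝ) (hθ : θ ∈ Set.Icc (0 : ℝ) 1) :
    Phi (θ • A + (1 - θ) • H) - θ • Phi A - (1 - θ) • Phi H
      = (θ * (1 - θ) / (θ * A.trace + (1 - θ) * H.trace)) •
        ((Real.sqrt (H.trace / A.trace) • A - Real.sqrt (A.trace / H.trace) • H) *
         (Real.sqrt (H.trace / A.trace) • A - Real.sqrt (A.trace / H.trace) • H)) := by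
  obtain ⟨hθ0, hθ1⟩ := hθ
  set a := A.trace with ha
  set h := H.trace with hh
  have ha0 : a ≠ 0 := ne_of_gt htrA
  have hh0 : h ≠ 0 := ne_of_gt htrH
  have ht : 0 < θ * a + (1 - θ) * h := by
    rcases eq_or_lt_of_le hθ0 with h0 | h0
    · simp [← h0]; linarith
    · nlinarith
  have ht0 : θ * a + (1 - θ) * h ≠ 0 := ne_of_gt ht
  have htr : (θ • A + (1 - θ) • H).trace = θ * a + (1 - θ) * h := by
    simp [Matrix.trace_add, Matrix.trace_smul, smul_eq_mul]
    rfl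
  have hs1 : Real.sqrt (h / a) * Real.sqrt (h / a) = h / a :=
    Real.mul_self_sqrt (by positivity)
  have hs2 : Real.sqrt (a / h) * Real.sqrt (a / h) = a / h :=
    Real.mul_self_sqrt (by positivity)
  have hs3 : Real.sqrt (h / a) * Real.sqrt (a / h) = 1 := by
    rw [← Real.sqrt_mul (by positivity)]
    rw [div_mul_div_comm, mul_comm h a, div_self (by positivity)]
    exact Real.sqrt_one
  unfold Phi
  rw [htr, ← ha, ← hh]
  ext i j
  simp only [Matrix.add_mul, Matrix.mul_add, Matrix.sub_mul, Matrix.mul_sub,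
    Matrix.smul_mul, Matrix.mul_smul, Matrix.sub_apply, Matrix.add_apply,
    Matrix.smul_apply, smul_eq_mul, smul_smul]
  set s := Real.sqrt (h / a) with hs
  set r := Real.sqrt (a / h) with hr
  have hs1c : a * (s * s) = h := by rw [hs1]; field_simp
  have hs2c : h * (r * r) = a := by rw [hs2]; field_simp
  field_simp
  linear_combination (-(θ*(1-θ)*h)) * (A*A) i j * hs1c
    + (-(θ*(1-θ)*a)) * (H*H) i j * hs2c
    + (θ*(1-θ)*a*h) * ((H*A) i j + (A*H) i j) * hs3
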